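/- Let A ⊆ [0,1] be a DCC set of non-negative numbers. Then the set B = {b ∈ A : b + a = 2 for some a ∈ A_∞} is finite. -/

import Mathlib

open Pointwise


/-- A set of reals satisfies the descending chain condition if it contains
no infinite strictly decreasing sequence. -/
def DCC (A : Set ℝ) : Prop := ∀ f : ℕ → ℝ, (∀ n, f n ∈ A) → ¬ StrictAnti f

/-- `Ainf A` is `{0}` together with all finite sums of elements of `A`. -/
def Ainf (A : Set ℝ) : Set ℝ :=
  {0} ∪ {x | ∃ n : ℕ, 0 < n ∧ ∃ g : Fin n → ℝ, (∀ i, g i ∈ A) ∧ x = ∑ i, g i}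

/-- Iterated sumsets. -/
def sumIter (S : Set ℝ) : ℕ → Set ℝ
  | 0 => {0}
  | k+1 => S + sumIter S k

lemma dcc_iff_isWF (A : Set ℝ) : DCC A ↔ A.IsWF := by
  rw [Set.isWF_iff_no_descending_seq]
  constructor
  · intro h f hf hmem
    exact h f hmem hf
  · intro h f hmem hf
    exact h f hf hmem

lemma sumIter_isWF {S : Set ℝ} (hS : S.IsWF) : ∀ k, (sumIter S k).IsWF := by
  intro k
  induction k with
  | zero => exact Set.isWF_singleton
  | succ k ih => exact hS.add ih

lemma sum_mem_sumIter {S : Set ℝ} {n : ℕ} (g : Fin n → ℝ) :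
    ∀ s : Finset (Fin n), (∀ i ∈ s, g i ∈ S) → ∑ i ∈ s, g i ∈ sumIter S s.card := by
  intro s
  induction s using Finset.induction_on with
  | empty => intro _; simp [sumIter]
  | @insert a s ha ih =>
    intro hmem
    rw [Finset.sum_insert ha, Finset.card_insert_of_notMem ha]
    exact Set.add_mem_add (hmem a (Finset.mem_insert_self a s))
      (ih fun i hi => hmem i (Finset.mem_insert_of_mem hi))

lemma sumIter_mono {S : Set ℝ} (h0 : (0:ℝ) ∈ S) {k m : ℕ} (hkm : k ≤ m) :
    sumIter S k ⊆ sumIter S m := by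
  induction hkm with
  | refl => exact subset_rfl
  | step _ ih =>
    intro x hx
    have : (0:ℝ) + x ∈ S + sumIter S _ := Set.add_mem_add h0 (ih hx)
    simpa [sumIter] using this

theorem finite_horizontal_coeffs (A : Set ℝ) (hA : A ⊆ Set.Icc 0 1)
    (h : DCC A) : {b ∈ A | ∃ a ∈ Ainf A, b + a = 2}.Finite := by
  have hWF : A.IsWF := (dcc_iff_isWF A).mp h
  set B := {b ∈ A | ∃ a ∈ Ainf A, b + a = 2} with hB
  -- case: A has no positive element
  by_cases hpos : (A ∩ Set.Ioi 0).Nonempty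
  · -- δ : minimal positive element of A
    have hPWF : (A ∩ Set.Ioi 0).IsWF := hWF.mono Set.inter_subset_left
    set δ := hPWF.min hpos with hδdef
    have hδmem := hPWF.min_mem hpos
    have hδpos : 0 < δ := hδmem.2
    have hδle : ∀ x ∈ A, 0 < x → δ ≤ x := fun x hx hx0 => hPWF.min_le hpos ⟨hx, hx0⟩
    set N := ⌈(2:ℝ)/δ⌉₊ with hN
    set S := A ∪ {(0:ℝ)} with hSdef
    have hSWF : S.IsWF := hWF.union Set.isWF_singleton
    have h0S : (0:ℝ) ∈ S := Or.inr rfl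
    have hTWF : (sumIter S N).IsWF := sumIter_isWF hSWF N
    -- every element of Ainf A that is ≤ 2 lies in sumIter S N
    have hkey : ∀ x ∈ Ainf A, x ≤ 2 → x ∈ sumIter S N := by
      rintro x (hx | ⟨n, hn, g, hg, rfl⟩) hx2
      · rw [Set.mem_singleton_iff] at hx
        subst hx
        exact sumIter_mono h0S (Nat.zero_le N) rfl
      · set s := Finset.univ.filter (fun i => g i ≠ 0) with hs
        have hsum : ∑ i ∈ s, g i = ∑ i, g i := Finset.sum_filter_ne_zero _
        have hmemS : ∀ i ∈ s, g i ∈ S := fun i _ => Or.inl (hg i)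
        have hδi : ∀ i ∈ s, δ ≤ g i := by
          intro i hi
          rw [hs, Finset.mem_filter] at hi
          exact hδle _ (hg i) (lt_of_le_of_ne (hA (hg i)).1 (Ne.symm hi.2))
        have hcard : (s.card : ℝ) * δ ≤ 2 := by
          have := Finset.card_nsmul_le_sum s g δ hδi
          rw [nsmul_eq_mul] at this
          linarith [hsum ▸ this, hx2]
        have hcardN : s.card ≤ N := by
          have h1 : (s.card : ℝ) ≤ 2/δ := by
            rw [le_div_iff₀ hδpos]; linarith
          have h2 : (2:ℝ)/δ ≤ (N : ℝ) := Nat.le_ceil _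
          exact_mod_cast h1.trans h2
        have := sum_mem_sumIter g s hmemS
        rw [hsum] at this
        exact sumIter_mono h0S hcardN this
    -- now suppose B is infinite and derive a contradiction
    rw [← Set.not_infinite]
    intro hBinf
    have hBsub : B ⊆ A := fun b hb => hb.1
    set f := hBinf.natEmbedding with hf
    have hBPWO : B.IsPWO := Set.isPWO_iff_isWF.mpr (hWF.mono hBsub)
    obtain ⟨φ, hφ⟩ := hBPWO.exists_monotone_subseq (f := fun n => ((f n : ℝ))) (fun n => (f n).2)
    set b : ℕ → ℝ := fun n => ((f (φ n) : ℝ)) with hbdef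
    have hbmono : Monotone b := hφ
    have hbinj : Function.Injective b := by
      intro m n hmn
      exact φ.injective (f.injective (Subtype.coe_injective hmn))
    have hbsm : StrictMono b := hbmono.strictMono_of_injective hbinj
    have hbB : ∀ n, b n ∈ B := fun n => (f (φ n)).2
    have hex : ∀ n : ℕ, ∃ c ∈ Ainf A, b n + c = 2 := fun n => (hbB n).2
    choose c hc1 hc2 using hex
    have hcanti : StrictAnti c := by
      intro m n hmn
      have h1 := hc2 m
      have h2 := hc2 n
      have := hbsm hmn
      linarith
    have hcmem : ∀ n, c n ∈ sumIter S N := by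
      intro n
      apply hkey _ (hc1 n)
      have hb0 : 0 ≤ b n := (hA (hbB n).1).1
      linarith [hc2 n]
    exact ((dcc_iff_isWF _).mpr hTWF) c hcmem hcanti
  · -- A ⊆ {0}
    have : B ⊆ {0} := by
      rintro b ⟨hbA, -⟩
      have := hA hbA
      by_contra hb0
      exact hpos ⟨b, hbA, lt_of_le_of_ne this.1 (Ne.symm hb0)⟩
    exact (Set.finite_singleton 0).subset this
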